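/- Let X ⊆ [0,1]^V be the set of feasible vectors for the equilibrium program on a graph G (∑_{j∈N(i)∪{i}} x_j ≥ 1 for all i; ∑_{j∈N(i)∪{i}} x_j > 1 ⟹ x_i = 0). Suppose u is a vertex with two degree-one neighbors w_1, w_2 (leaves attached only to u). Then every x ∈ X satisfies x_u ∈ {0,1}. -/

import Mathlib

/-- Variable-gadget rigidity: if u has two leaf neighbors, then every
feasible x has x_u ∈ {0,1}. -/
theorem stmt_19 {V : Type*} [Fintype V] [DecidableEq V]
    (G : SimpleGraph V) [DecidableRel G.Adj]
    (u w₁ w₂ : V) (hw : w₁ ≠ w₂)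
    (hw₁ : G.neighborFinset w₁ = {u}) (hw₂ : G.neighborFinset w₂ = {u})
    (x : V → ℝ) (hx01 : ∀ i, x i ∈ Set.Icc (0:ℝ) 1)
    (hfeas : ∀ i, 1 ≤ ∑ j ∈ insert i (G.neighborFinset i), x j)
    (hcomp : ∀ i, 1 < ∑ j ∈ insert i (G.neighborFinset i), x j → x i = 0) :
    x u = 0 ∨ x u = 1 := by
  by_cases h1 : x u = 1
  · exact Or.inr h1
  left
  have hadj1 : G.Adj w₁ u := by
    rw [← SimpleGraph.mem_neighborFinset, hw₁]; simp
  have hadj2 : G.Adj w₂ u := by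
    rw [← SimpleGraph.mem_neighborFinset, hw₂]; simp
  have hne1 : w₁ ≠ u := hadj1.ne
  have hne2 : w₂ ≠ u := hadj2.ne
  -- leaf bounds
  have hb1 : 1 ≤ x w₁ + x u := by
    have := hfeas w₁
    rwa [hw₁, Finset.insert_eq, Finset.sum_union (by simp [hne1.symm, hne1]),
      Finset.sum_singleton, Finset.sum_singleton] at this
  have hb2 : 1 ≤ x w₂ + x u := by
    have := hfeas w₂
    rwa [hw₂, Finset.insert_eq, Finset.sum_union (by simp [hne2.symm, hne2]),
      Finset.sum_singleton, Finset.sum_singleton] at this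
  -- subset sum
  have hsub : ({u, w₁, w₂} : Finset V) ⊆ insert u (G.neighborFinset u) := by
    intro a ha
    simp only [Finset.mem_insert, Finset.mem_singleton] at ha
    rcases ha with rfl | rfl | rfl
    · exact Finset.mem_insert_self _ _
    · exact Finset.mem_insert_of_mem (by rwa [SimpleGraph.mem_neighborFinset, G.adj_comm])
    · exact Finset.mem_insert_of_mem (by rwa [SimpleGraph.mem_neighborFinset, G.adj_comm])
  have hsum3 : ∑ j ∈ ({u, w₁, w₂} : Finset V), x j = x u + x w₁ + x w₂ := by
    rw [Finset.sum_insert (by simp [hne1.symm, hne2.symm]),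
      Finset.sum_insert (by simp [hw]), Finset.sum_singleton, add_assoc]
  have hle : ∑ j ∈ ({u, w₁, w₂} : Finset V), x j ≤ ∑ j ∈ insert u (G.neighborFinset u), x j :=
    Finset.sum_le_sum_of_subset_of_nonneg hsub (fun i _ _ => (hx01 i).1)
  have hlt : 1 < ∑ j ∈ insert u (G.neighborFinset u), x j := by
    have hxu : x u < 1 := lt_of_le_of_ne (hx01 u).2 h1
    have : 2 - x u ≤ x u + x w₁ + x w₂ := by linarith
    rw [hsum3] at hle
    linarith
  exact hcomp u hlt
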